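/- arXiv:0910.3326 — 7 statements merged into one kernel-verified Lean document; each statement's English description precedes it below -/
import Mathlib

section
/- Let Λ₀ be a finite-dimensional commutative real algebra with unit e₀ and basis (e₀,…,e_p) satisfying condition (A₀): Σ_{k=0}^{p} e_k² = 0. If f : U ⊆ Λ₀ → Λ₀ is C² and S-differentiable on the open set U, then f is harmonic: Σ_{k=0}^{p} ∂²f/∂(xᵏ)² = 0 on U. -/
/-- Under condition (A₀), a C² S-differentiable function on an open
subset of Λ₀ is harmonic: Σ_k ∂²f/∂(xᵏ)² = 0. -/
theorem stmt6 {A : Type*} [NormedCommRing A] [NormedAlgebra ℝ A] {p : ℕ}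
    (e : Module.Basis (Fin (p + 1)) ℝ A) (he0 : e 0 = 1)
    (hA0 : ∑ k, (e k) ^ 2 = 0)
    (U : Set A) (hU : IsOpen U) (f : A → A) (hf : ContDiffOn ℝ 2 f U)
    (hS : ∀ x ∈ U, ∀ k, fderiv ℝ f x (e k) = e k * fderiv ℝ f x (e 0)) :
    ∀ x ∈ U, ∑ k, fderiv ℝ (fun y => fderiv ℝ f y (e k)) x (e k) = 0 := by
  intro x hx
  have hxU : U ∈ nhds x := hU.mem_nhds hx
  have hfx : ContDiffAt ℝ 2 f x := hf.contDiffAt hxU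
  have hdg : DifferentiableAt ℝ (fderiv ℝ f) x :=
    (hfx.fderiv_right (m := 1) (by norm_num)).differentiableAt (by norm_num)
  have hsymm : IsSymmSndFDerivAt ℝ f x := hfx.isSymmSndFDerivAt (by simp [minSmoothness_of_isRCLikeNormedField])
  have hd0 : DifferentiableAt ℝ (fun y => fderiv ℝ f y (e 0)) x :=
    hdg.clm_apply (differentiableAt_const _)
  have key : ∀ v w, fderiv ℝ (fun y => fderiv ℝ f y v) x w
      = fderiv ℝ (fderiv ℝ f) x w v := by
    intro v w
    rw [fderiv_clm_apply hdg (differentiableAt_const v)]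
    simp
  have hterm : ∀ k, fderiv ℝ (fun y => fderiv ℝ f y (e k)) x (e k)
      = e k ^ 2 * fderiv ℝ (fun y => fderiv ℝ f y (e 0)) x (e 0) := by
    intro k
    have hev : (fun y => fderiv ℝ f y (e k)) =ᶠ[nhds x]
        (fun y => e k * fderiv ℝ f y (e 0)) := by
      filter_upwards [hxU] with y hy using hS y hy k
    have h1 : fderiv ℝ (fun y => fderiv ℝ f y (e k)) x
        = e k • fderiv ℝ (fun y => fderiv ℝ f y (e 0)) x := by
      rw [hev.fderiv_eq, fderiv_const_mul hd0]
    calc fderiv ℝ (fun y => fderiv ℝ f y (e k)) x (e k)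
        = e k * fderiv ℝ (fun y => fderiv ℝ f y (e 0)) x (e k) := by
          rw [h1]; simp [smul_eq_mul]
      _ = e k * fderiv ℝ (fun y => fderiv ℝ f y (e k)) x (e 0) := by
          rw [key, key, hsymm.eq]
      _ = e k * (e k * fderiv ℝ (fun y => fderiv ℝ f y (e 0)) x (e 0)) := by
          rw [h1]; simp [smul_eq_mul]
      _ = e k ^ 2 * fderiv ℝ (fun y => fderiv ℝ f y (e 0)) x (e 0) := by ring
  rw [Finset.sum_congr rfl fun k _ => hterm k, ← Finset.sum_mul, hA0, zero_mul]
end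

section
/- Under condition (A₀) on Λ₀, if f is S-differentiable on an open set U ⊆ Λ₀ and of class C², then each real-component function fⱼ of f (in the basis e₀,…,e_p) is a harmonic function on U ⊆ ℝ^{p+1}. -/
/-- Under condition (A₀), each real component fⱼ (in the basis
e₀,…,e_p) of a C² S-differentiable function on an open set U ⊆ Λ₀ is harmonic. -/
theorem stmt7 {A : Type*} [NormedCommRing A] [NormedAlgebra ℝ A] {p : ℕ}
    (e : Module.Basis (Fin (p + 1)) ℝ A) (he0 : e 0 = 1)
    (hA0 : ∑ k, (e k) ^ 2 = 0)
    (U : Set A) (hU : IsOpen U) (f : A → A) (hf : ContDiffOn ℝ 2 f U)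
    (hS : ∀ x ∈ U, ∀ k, fderiv ℝ f x (e k) = e k * fderiv ℝ f x (e 0)) :
    ∀ j : Fin (p + 1), ∀ x ∈ U,
      ∑ k, fderiv ℝ (fun y => fderiv ℝ (fun z => e.repr (f z) j) y (e k)) x (e k) = 0 := by
  intro j x hx
  haveI : FiniteDimensional ℝ A := e.finiteDimensional_of_finite
  have hxU : ∀ᶠ y in nhds x, y ∈ U := hU.eventually_mem hx
  have hca : ∀ y ∈ U, ContDiffAt ℝ 2 f y := fun y hy => hf.contDiffAt (hU.mem_nhds hy)
  have hdiff : ∀ y ∈ U, DifferentiableAt ℝ f y :=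
    fun y hy => (hca y hy).differentiableAt two_ne_zero
  have hdfx : DifferentiableAt ℝ f x := hdiff x hx
  have hd2 : DifferentiableAt ℝ (fderiv ℝ f) x :=
    ((hca x hx).fderiv_right (m := 1) (by norm_num)).differentiableAt one_ne_zero
  set c := fderiv ℝ (fderiv ℝ f) x with hc
  -- symmetry of second derivative
  have hsymm : ∀ v w, c v w = c w v := by
    intro v w
    exact second_derivative_symmetric_of_eventually
      (hxU.mono fun y hy => (hdiff y hy).hasFDerivAt) hd2.hasFDerivAt v w
  -- derivative of y ↦ fderiv f y v
  have happly : ∀ v : A, HasFDerivAt (fun y => fderiv ℝ f y v)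
      ((ContinuousLinearMap.apply ℝ A v).comp c) x :=
    fun v => (ContinuousLinearMap.apply ℝ A v).hasFDerivAt.comp x hd2.hasFDerivAt
  -- key relation : c w (e k) = e k * c w (e 0)
  have hkey : ∀ k w, c w (e k) = e k * c w (e 0) := by
    intro k w
    have heq : (fun y => fderiv ℝ f y (e k)) =ᶠ[nhds x]
        (fun y => e k * fderiv ℝ f y (e 0)) :=
      hxU.mono fun y hy => hS y hy k
    have h1 : HasFDerivAt (fun y => e k * fderiv ℝ f y (e 0))
        (e k • ((ContinuousLinearMap.apply ℝ A (e 0)).comp c)) x :=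
      (happly (e 0)).const_mul (e k)
    have h2 : HasFDerivAt (fun y => fderiv ℝ f y (e k))
        (e k • ((ContinuousLinearMap.apply ℝ A (e 0)).comp c)) x :=
      h1.congr_of_eventuallyEq heq
    have := h2.fderiv
    have h3 := (happly (e k)).fderiv
    have h4 : ((ContinuousLinearMap.apply ℝ A (e k)).comp c : A →L[ℝ] A)
        = e k • ((ContinuousLinearMap.apply ℝ A (e 0)).comp c) := by
      rw [← h3, ← this]
    have := congrArg (fun (T : A →L[ℝ] A) => T w) h4
    simpa [smul_eq_mul] using this
  -- sum of diagonal second derivatives vanishes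
  have hsum0 : ∑ k, c (e k) (e k) = 0 := by
    have : ∀ k, c (e k) (e k) = e k ^ 2 * c (e 0) (e 0) := by
      intro k
      rw [hkey k (e k), hsymm (e k) (e 0), hkey k (e 0)]
      ring
    rw [Finset.sum_congr rfl fun k _ => this k, ← Finset.sum_mul, hA0, zero_mul]
  -- coordinate functional as continuous linear map
  set L : A →L[ℝ] ℝ := LinearMap.toContinuousLinearMap (e.coord j) with hL
  have hLapp : ∀ z : A, L z = e.repr z j := fun z => rfl
  -- rewrite each summand as L (c (e k) (e k))
  have hterm : ∀ k, fderiv ℝ (fun y => fderiv ℝ (fun z => e.repr (f z) j) y (e k)) x (e k)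
      = L (c (e k) (e k)) := by
    intro k
    have heq1 : (fun y => fderiv ℝ (fun z => e.repr (f z) j) y (e k)) =ᶠ[nhds x]
        (fun y => L (fderiv ℝ f y (e k))) := by
      refine hxU.mono fun y hy => ?_
      have hcomp : HasFDerivAt (fun z => e.repr (f z) j)
          (L.comp (fderiv ℝ f y)) y := by
        have : HasFDerivAt (fun z => L (f z)) (L.comp (fderiv ℝ f y)) y :=
          L.hasFDerivAt.comp y (hdiff y hy).hasFDerivAt
        simpa [hLapp] using this
      show (fderiv ℝ (fun z => e.repr (f z) j) y) (e k) = L ((fderiv ℝ f y) (e k))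
      rw [hcomp.fderiv]; rfl
    have h2 : HasFDerivAt (fun y => L (fderiv ℝ f y (e k)))
        (L.comp ((ContinuousLinearMap.apply ℝ A (e k)).comp c)) x :=
      L.hasFDerivAt.comp x (happly (e k))
    have h3 : HasFDerivAt (fun y => fderiv ℝ (fun z => e.repr (f z) j) y (e k))
        (L.comp ((ContinuousLinearMap.apply ℝ A (e k)).comp c)) x :=
      h2.congr_of_eventuallyEq heq1
    rw [h3.fderiv]; rfl
  rw [Finset.sum_congr rfl fun k _ => hterm k, ← map_sum, hsum0, map_zero]
end

section
/- Let f be a homogeneous polynomial of degree d ≥ 2 on Λ₀ (in the real coordinates), S-differentiable, and suppose each partial derivative ∂f/∂yᵏ equals eₖ · b · y^{d-1} for a fixed b ∈ Λ₀ (with y the algebra variable). Then f(y) = (b/d) · y^d, obtained via the Euler-type integration f(y) = ∫₀¹ Df(ty)(y) dt. -/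
/-- If f is homogeneous of degree d ≥ 2, differentiable, and
∂f/∂yᵏ(y) = eₖ·b·y^{d-1} for all k (with e₀ = 1), then f(y) = (1/d)·b·y^d. -/
theorem stmt12 {A : Type*} [NormedCommRing A] [NormedAlgebra ℝ A] {p : ℕ}
    (e : Module.Basis (Fin (p + 1)) ℝ A) (he0 : e 0 = 1)
    (f : A → A) (d : ℕ) (hd : 2 ≤ d)
    (hdiff : Differentiable ℝ f)
    (hhom : ∀ (t : ℝ) (y : A), f (t • y) = t ^ d • f y)
    (b : A)
    (hpart : ∀ (y : A) (k : Fin (p + 1)),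
      fderiv ℝ f y (e k) = e k * (b * y ^ (d - 1))) :
    ∀ y : A, f y = (d : ℝ)⁻¹ • (b * y ^ d) := by
  intro y
  -- the full derivative is multiplication by b * y^(d-1)
  have hlin : (fderiv ℝ f y).toLinearMap = LinearMap.mulLeft ℝ (b * y ^ (d - 1)) := by
    apply e.ext
    intro k
    simp [hpart y k, mul_comm, mul_assoc]
  have hDy : fderiv ℝ f y y = b * y ^ (d - 1) * y := by
    have := congrArg (fun L => L y) hlin
    simpa [mul_assoc] using this
  -- Euler identity via the curve t ↦ f (t • y)
  have h1 : HasDerivAt (fun t : ℝ => f (t • y)) (fderiv ℝ f y y) 1 := by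
    have hc : HasDerivAt (fun t : ℝ => t • y) y 1 := by
      simpa using (hasDerivAt_id (1 : ℝ)).smul_const y
    have := ((hdiff ((1 : ℝ) • y)).hasFDerivAt).comp_hasDerivAt 1 hc
    simp only [one_smul] at this
    exact this
  have h2 : HasDerivAt (fun t : ℝ => f (t • y)) ((d : ℝ) • f y) 1 := by
    have : HasDerivAt (fun t : ℝ => t ^ d • f y) ((d : ℝ) • f y) 1 := by
      simpa using (hasDerivAt_pow d (1 : ℝ)).smul_const (f y)
    exact this.congr_of_eventuallyEq (Filter.Eventually.of_forall fun t => hhom t y)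
  have heuler : (d : ℝ) • f y = b * y ^ (d - 1) * y := by
    rw [← hDy]; exact (h2.unique h1)
  have hdne : (d : ℝ) ≠ 0 := by
    have : (0 : ℕ) < d := by omega
    exact_mod_cast this.ne'
  have hpow : b * y ^ (d - 1) * y = b * y ^ d := by
    rw [mul_assoc, ← pow_succ]
    congr 2
    omega
  rw [← hpow, ← heuler, smul_smul, inv_mul_cancel₀ hdne, one_smul]
end

section
/- Let Λ₀ be a finite-dimensional commutative real algebra satisfying condition (A₀), and suppose f : Λ₀ⁿ × Λ₁^m → Λ is qS-differentiable on all of the superspace and bounded in norm. Then f is constant. (Liouville-type theorem.) -/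
open Complex Set Bornology

/-- Newton iteration: if `x ^ 2 + 1` is nilpotent, then `-1` has a square root. -/
private lemma newton_sqrt {A : Type*} [CommRing A] [Algebra ℝ A] (k : ℕ) :
    ∀ x : A, (x ^ 2 + 1) ^ k = 0 → ∃ j : A, j ^ 2 = -1 := by
  induction k using Nat.strong_induction_on with
  | _ k ih =>
  intro x hx
  rcases Nat.lt_or_ge k 2 with hk | hk
  · interval_cases k
    · have h1 : (1 : A) = 0 := by simpa using hx
      exact ⟨0, by linear_combination h1⟩
    · exact ⟨x, by linear_combination hx⟩
  · have hh2 : (algebraMap ℝ A (1/2)) * 2 = 1 := by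
      rw [show (2 : A) = algebraMap ℝ A 2 from (map_ofNat _ 2).symm, ← map_mul]
      norm_num
    set h2 : A := algebraMap ℝ A (1/2)
    have hnil : IsNilpotent (x ^ 2 + 1) := ⟨k, hx⟩
    have h1 : IsUnit (x * x) := by
      have hxx : x * x = (x ^ 2 + 1) - 1 := by ring
      rw [hxx]; exact hnil.isUnit_sub_one
    obtain ⟨y, hy⟩ := (isUnit_of_mul_isUnit_left h1).exists_right_inv
    have key : (x - (x ^ 2 + 1) * y * h2) ^ 2 + 1
        = ((x ^ 2 + 1) ^ 2 * y ^ 2) * h2 ^ 2 := by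
      linear_combination (-2 * (x ^ 2 + 1) * h2) * hy + (-(x ^ 2 + 1)) * hh2
    have hme : (x ^ 2 + 1) ^ (2 * ((k + 1) / 2)) = 0 := by
      rw [show 2 * ((k + 1) / 2) = k + (2 * ((k + 1) / 2) - k) by omega, pow_add, hx, zero_mul]
    have hz : ((x - (x ^ 2 + 1) * y * h2) ^ 2 + 1) ^ ((k + 1) / 2) = 0 := by
      rw [key, show (x ^ 2 + 1) ^ 2 * y ^ 2 * h2 ^ 2
          = (x ^ 2 + 1) ^ 2 * (y ^ 2 * h2 ^ 2) by ring, mul_pow, ← pow_mul, hme, zero_mul]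
    exact ih ((k + 1) / 2) (by omega) _ hz

/-- Under condition (A₀), the algebra contains a square root of `-1`. -/
private lemma exists_sqrt_neg_one {A : Type*} [CommRing A] [Algebra ℝ A] {q : ℕ}
    (e : Module.Basis (Fin (q + 1)) ℝ A) (he0 : e 0 = 1) (hA0 : ∑ k, (e k) ^ 2 = 0) :
    ∃ j : A, j ^ 2 = -1 := by
  haveI : Module.Finite ℝ A := Module.Finite.of_basis e
  haveI : IsArtinianRing A := isArtinian_of_tower ℝ inferInstance
  have hK : ∀ I : MaximalSpectrum A, ∃ y : A ⧸ I.1, y ^ 2 = -1 := by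
    intro I
    haveI : I.1.IsMaximal := I.2
    letI : Field (A ⧸ I.1) := Ideal.Quotient.field I.1
    haveI : Module.Finite ℝ (A ⧸ I.1) :=
      Module.Finite.of_surjective (Ideal.Quotient.mkₐ ℝ I.1).toLinearMap
        (Ideal.Quotient.mkₐ_surjective ℝ I.1)
    let φ : (A ⧸ I.1) →ₐ[ℝ] ℂ := IsAlgClosed.lift
    set ψ : A →+* (A ⧸ I.1) := Ideal.Quotient.mk I.1 with hψ
    have hinj : Function.Injective φ := RingHom.injective φ.toRingHom
    have hsum : ∑ k, (φ (ψ (e k))) ^ 2 = 0 := by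
      have h := congrArg (fun a => φ (ψ a)) hA0
      simpa [map_sum, map_pow] using h
    have h0 : φ (ψ (e 0)) = 1 := by rw [he0]; simp
    have hex : ∃ k, (φ (ψ (e k))).im ≠ 0 := by
      by_contra h
      push_neg at h
      have hbk : ∀ k, φ (ψ (e k)) = ((φ (ψ (e k))).re : ℂ) :=
        fun k => Complex.ext rfl (by simp [h k])
      have hre : ∑ k, ((φ (ψ (e k))).re) ^ 2 = 0 := by
        have h1 : ((∑ k, ((φ (ψ (e k))).re ^ 2 : ℝ) : ℝ) : ℂ) = 0 := by
          push_cast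
          rw [← hsum]
          exact Finset.sum_congr rfl fun k _ => by rw [← hbk k]
        exact_mod_cast h1
      have h00 : ((φ (ψ (e 0))).re) ^ 2 = 0 :=
        (Finset.sum_eq_zero_iff_of_nonneg (fun k _ => sq_nonneg _)).mp hre 0 (Finset.mem_univ 0)
      rw [h0] at h00
      norm_num at h00
    obtain ⟨u, hu⟩ := hex
    set z := φ (ψ (e u)) with hzdef
    refine ⟨(ψ (e u) - algebraMap ℝ _ z.re) * algebraMap ℝ _ (z.im)⁻¹, ?_⟩
    apply hinj
    rw [map_pow, map_mul, map_sub, φ.commutes, φ.commutes, map_neg, map_one]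
    have hzz : (z - ((z.re : ℝ) : ℂ)) = (z.im : ℂ) * Complex.I := by
      apply Complex.ext <;> simp
    rw [show algebraMap ℝ ℂ z.re = ((z.re : ℝ) : ℂ) from rfl,
        show algebraMap ℝ ℂ (z.im)⁻¹ = (((z.im)⁻¹ : ℝ) : ℂ) from rfl, ← hzdef, hzz]
    have ha : (z.im : ℂ) ≠ 0 := by exact_mod_cast hu
    push_cast
    rw [show ((z.im : ℂ) * Complex.I) * ((z.im : ℂ))⁻¹
        = ((z.im : ℂ) * ((z.im : ℂ))⁻¹) * Complex.I by ring, mul_inv_cancel₀ ha, one_mul,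
      Complex.I_sq]
  choose g hg using hK
  set E := IsArtinianRing.quotNilradicalEquivPi A
  obtain ⟨x, hxmk⟩ := Ideal.Quotient.mk_surjective (I := nilradical A) (E.symm g)
  have hg2 : g ^ 2 = -1 := funext fun I => hg I
  have hsq : (E.symm g) ^ 2 = -1 := by
    rw [← map_pow, hg2, map_neg, map_one]
  have hnil : IsNilpotent (x ^ 2 + 1) := by
    rw [← mem_nilradical, ← Ideal.Quotient.eq_zero_iff_mem]
    rw [map_add, map_pow, hxmk, map_one, hsq, neg_add_cancel]
  obtain ⟨k, hk⟩ := hnil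
  exact newton_sqrt k x hk

/-- Liouville-type theorem (case m = 0). Under condition (A₀), a
function f : Λ₀ⁿ → Λ₀ which is differentiable, S-differentiable in each variable
everywhere, and bounded in norm, is constant. -/
theorem stmt14 {A : Type*} [NormedCommRing A] [NormedAlgebra ℝ A] {p n : ℕ}
    (e : Module.Basis (Fin (p + 1)) ℝ A) (he0 : e 0 = 1)
    (hA0 : ∑ k, (e k) ^ 2 = 0)
    (f : (Fin n → A) → A) (hdiff : Differentiable ℝ f)
    (hS : ∀ x : Fin n → A, ∀ i : Fin n, ∀ k : Fin (p + 1),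
      fderiv ℝ f x (Pi.single i (e k)) = e k * fderiv ℝ f x (Pi.single i (e 0)))
    (C : ℝ) (hbound : ∀ x, ‖f x‖ ≤ C) :
    ∀ x y, f x = f y := by
  haveI : Module.Finite ℝ A := Module.Finite.of_basis e
  haveI : FiniteDimensional ℝ A := Module.Finite.of_basis e
  obtain ⟨j, hj⟩ := exists_sqrt_neg_one e he0 hA0
  -- S-differentiability for arbitrary directions
  have hD : ∀ (x : Fin n → A) (i : Fin n) (a : A),
      fderiv ℝ f x (Pi.single i a) = a * fderiv ℝ f x (Pi.single i 1) := by
    intro x i a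
    have hrepr := e.sum_repr a
    have hsingle : Pi.single i a
        = ∑ k, e.repr a k • (Pi.single i (e k) : Fin n → A) := by
      rw [show Pi.single i a = LinearMap.single ℝ (fun _ : Fin n => A) i a from rfl, ← hrepr,
        map_sum]
      simp [LinearMap.single_apply]
    rw [hsingle, map_sum]
    have hterm : ∀ k, fderiv ℝ f x (e.repr a k • (Pi.single i (e k) : Fin n → A))
        = e.repr a k • (e k * fderiv ℝ f x (Pi.single i 1)) := by
      intro k
      rw [map_smul]
      congr 1
      simpa [he0] using hS x i k
    rw [Finset.sum_congr rfl fun k _ => hterm k]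
    calc (∑ k, e.repr a k • (e k * fderiv ℝ f x (Pi.single i 1)))
        = (∑ k, e.repr a k • e k) * fderiv ℝ f x (Pi.single i 1) := by
          rw [Finset.sum_mul]
          exact Finset.sum_congr rfl fun k _ => (smul_mul_assoc _ _ _).symm
      _ = a * fderiv ℝ f x (Pi.single i 1) := by rw [hrepr]
  -- the key step: f is invariant under translation in a single coordinate
  have key : ∀ (x : Fin n → A) (i : Fin n) (a : A), f (x + Pi.single i a) = f x := by
    intro x i a
    rw [← sub_eq_zero, ← Module.forall_dual_apply_eq_zero_iff ℝ]
    intro L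
    rw [map_sub, sub_eq_zero]
    set Lc : A →L[ℝ] ℝ := LinearMap.toContinuousLinearMap L with hLc
    have hLcL : ∀ v : A, Lc v = L v := fun v => rfl
    -- the ℝ-linear embedding ℂ →L[ℝ] A, z ↦ z.re • 1 + z.im • j
    set c : ℂ →L[ℝ] A := (Complex.reCLM.smulRight (1 : A)) + (Complex.imCLM.smulRight j)
      with hc
    have hc_apply : ∀ u : ℂ, c u = u.re • (1 : A) + u.im • j := by
      intro u; simp [hc]
    have hc1 : c 1 = 1 := by simp [hc_apply]
    -- the direction map ℂ →L[ℝ] (Fin n → A)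
    set ψv : ℂ →L[ℝ] (Fin n → A) :=
      (LinearMap.toContinuousLinearMap (LinearMap.single ℝ (fun _ : Fin n => A) i)).comp
        (((ContinuousLinearMap.mul ℝ A) a).comp c) with hψv
    have hψ_apply : ∀ u : ℂ, ψv u = Pi.single i (a * c u) := fun u => rfl
    -- the ℝ-linear functional A →L[ℝ] ℂ encoding L and L(j·)
    set φm : A →L[ℝ] ℂ :=
      Complex.ofRealCLM.comp Lc
        - Complex.I • (Complex.ofRealCLM.comp (Lc.comp ((ContinuousLinearMap.mul ℝ A) j)))
      with hφm
    have hφm_apply : ∀ v : A, φm v = ((Lc v : ℝ) : ℂ) - Complex.I * ((Lc (j * v) : ℝ) : ℂ) := by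
      intro v; simp [hφm]
    have hphi : ∀ v : A, φm (j * v) = Complex.I * φm v := by
      intro v
      rw [hφm_apply, hφm_apply]
      have hjj : j * (j * v) = -v := by
        rw [← mul_assoc, ← sq, hj, neg_one_mul]
      rw [hjj, map_neg]
      push_cast
      linear_combination ((Lc (j * v) : ℝ) : ℂ) * Complex.I_sq
    -- the auxiliary entire function
    set H : ℂ → ℂ := fun u => φm (f (x + ψv u)) with hH
    have hHderiv : ∀ u : ℂ,
        HasFDerivAt H (φm.comp ((fderiv ℝ f (x + ψv u)).comp ψv)) u := by
      intro u
      have h1 : HasFDerivAt (fun w : ℂ => x + ψv w) ψv u := ψv.hasFDerivAt.const_add x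
      exact φm.hasFDerivAt.comp u (((hdiff (x + ψv u)).hasFDerivAt).comp u h1)
    have hHdiffC : Differentiable ℂ H := by
      intro u
      set D : A := fderiv ℝ f (x + ψv u) (Pi.single i 1) with hDdef
      refine (differentiableAt_iff_restrictScalars ℝ (hHderiv u).differentiableAt).mpr
        ⟨(φm (a * D)) • (ContinuousLinearMap.id ℂ ℂ), ?_⟩
      rw [(hHderiv u).fderiv]
      refine ContinuousLinearMap.ext fun w => ?_
      show (φm (a * D)) • w = φm ((fderiv ℝ f (x + ψv u)) (ψv w))
      rw [hψ_apply w, hD, hc_apply w, ← hDdef]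
      have hexp : a * (w.re • (1 : A) + w.im • j) * D
          = w.re • (a * D) + w.im • (j * (a * D)) := by
        rw [mul_add, add_mul]
        rw [mul_smul_comm, mul_smul_comm, smul_mul_assoc, smul_mul_assoc, mul_one]
        congr 2
        ring
      rw [hexp, map_add, map_smul, map_smul, hphi]
      apply Complex.ext <;>
        simp [Complex.mul_re, Complex.mul_im, smul_eq_mul] <;> ring
    -- boundedness
    have hb : IsBounded (range H) := by
      rw [isBounded_iff_forall_norm_le]
      refine ⟨‖φm‖ * C, ?_⟩
      rintro _ ⟨u, rfl⟩
      calc ‖H u‖ ≤ ‖φm‖ * ‖f (x + ψv u)‖ := φm.le_opNorm _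
        _ ≤ ‖φm‖ * C := mul_le_mul_of_nonneg_left (hbound _) (norm_nonneg _)
    -- Liouville
    have h10 := hHdiffC.apply_eq_apply_of_bounded hb 1 0
    have hψ1 : ψv 1 = Pi.single i a := by rw [hψ_apply, hc1, mul_one]
    have hψ0 : ψv 0 = 0 := map_zero ψv
    have hre : ∀ v : A, (φm v).re = L v := by
      intro v
      rw [hφm_apply]
      simp [hLcL]
    have h10' : (φm (f (x + Pi.single i a))).re = (φm (f x)).re := by
      have h := congrArg Complex.re h10
      simp only [hH] at h
      rwa [hψ1, hψ0, add_zero] at h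
    rwa [hre, hre] at h10'
  -- conclude
  intro x y
  have hupd : ∀ (z : Fin n → A) (i : Fin n) (v : A), f (Function.update z i v) = f z := by
    intro z i v
    have hzz : Function.update z i v = z + Pi.single i (v - z i) := by
      funext t
      by_cases h : t = i
      · subst h; simp
      · simp [Function.update_of_ne h, Pi.single_eq_of_ne h]
    rw [hzz, key]
  have main : ∀ s : Finset (Fin n), f (fun i => if i ∈ s then y i else x i) = f x := by
    intro s
    induction s using Finset.induction_on with
    | empty => simp
    | @insert b s hb ih =>
      have hfun : (fun i => if i ∈ insert b s then y i else x i)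
          = Function.update (fun i => if i ∈ s then y i else x i) b (y b) := by
        funext t
        by_cases h : t = b
        · subst h; simp
        · simp [Function.update_of_ne h, Finset.mem_insert, h]
      rw [hfun, hupd, ih]
  have hmain := main Finset.univ
  simp only [Finset.mem_univ, if_true] at hmain
  exact hmain.symm
end

section
/- In the algebra Λ₀ of Example 4 of the paper (6-dimensional commutative algebra with basis e₀,…,e₅ and multiplication table: e₁² = -e₀, e₁e₂ = e₃, e₁e₃ = -e₂, e₁e₄ = e₅, e₁e₅ = -e₄, e₄² = e₄, e₄e₅ = e₅, e₅² = -e₄, and eᵢeⱼ = 0 for all other products of e₂,…,e₅), the set of nilpotent elements is exactly span(e₂, e₃). -/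
open Complex

/-- In the 6-dimensional commutative algebra of Example 4 of the
paper, the set of nilpotent elements is exactly span(e₂, e₃). -/
theorem stmt15 {A : Type*} [CommRing A] [Algebra ℝ A]
    (e : Module.Basis (Fin 6) ℝ A) (h0 : e 0 = 1)
    (h11 : e 1 * e 1 = -e 0) (h12 : e 1 * e 2 = e 3) (h13 : e 1 * e 3 = -e 2)
    (h14 : e 1 * e 4 = e 5) (h15 : e 1 * e 5 = -e 4)
    (h22 : e 2 * e 2 = 0) (h23 : e 2 * e 3 = 0) (h24 : e 2 * e 4 = 0)
    (h25 : e 2 * e 5 = 0)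
    (h33 : e 3 * e 3 = 0) (h34 : e 3 * e 4 = 0) (h35 : e 3 * e 5 = 0)
    (h44 : e 4 * e 4 = e 4) (h45 : e 4 * e 5 = e 5) (h55 : e 5 * e 5 = -e 4) :
    ∀ x : A, IsNilpotent x ↔ x ∈ Submodule.span ℝ ({e 2, e 3} : Set A) := by
  classical
  intro x
  constructor
  · intro hx
    set v : Fin 6 → ℂ × ℂ :=
      ![(1,1), (I,I), 0, 0, (0,1), (0,I)] with hv
    set χ : A →ₗ[ℝ] ℂ × ℂ := e.constr ℝ v with hχ
    have hb : ∀ i, χ (e i) = v i := fun i => e.constr_basis ℝ v i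
    have hb0 : χ (e 0) = (1,1) := by rw [hb]; rfl
    have hb1 : χ (e 1) = (I,I) := by rw [hb]; rfl
    have hb2 : χ (e 2) = 0 := by rw [hb]; rfl
    have hb3 : χ (e 3) = 0 := by rw [hb]; rfl
    have hb4 : χ (e 4) = (0,1) := by rw [hb]; rfl
    have hb5 : χ (e 5) = (0,I) := by rw [hb]; rfl
    have hone : χ 1 = 1 := by rw [← h0, hb0]; rfl
    have key : ∀ y z : A, χ (y * z) = χ y * χ z := by
      have H : ((LinearMap.mul ℝ A).compr₂ χ) =
          (LinearMap.mul ℝ (ℂ × ℂ)).compl₁₂ χ χ := by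
        apply e.ext; intro i
        apply e.ext; intro j
        simp only [LinearMap.compr₂_apply, LinearMap.compl₁₂_apply,
          LinearMap.mul_apply']
        fin_cases i <;> fin_cases j <;>
          simp [h0, h11, h12, h13, h14, h15, h22, h23, h24, h25, h33, h34,
            h35, h44, h45, h55, hb0, hb1, hb2, hb3, hb4, hb5, hone,
            mul_comm, Prod.ext_iff, Complex.ext_iff]
      intro y z
      simpa using congrArg (fun f => f z) (congrArg (fun f => f y) H)
    have hpow : ∀ n : ℕ, χ (x ^ n) = (χ x) ^ n := by
      intro n
      induction n with
      | zero => simpa using hone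
      | succ n ih => rw [pow_succ, key, ih, pow_succ]
    obtain ⟨n, hn⟩ := hx
    have hA1 : (1 : A) ≠ 0 := by
      rw [← h0]; exact e.ne_zero 0
    have hn0 : n ≠ 0 := by
      rintro rfl
      simp at hn
      exact hA1 hn
    have hχ0 : χ x = 0 := by
      have h1 : (χ x) ^ n = 0 := by rw [← hpow, hn, map_zero]
      have h1a : (χ x).1 ^ n = 0 := by
        have := congrArg Prod.fst h1; simpa using this
      have h1b : (χ x).2 ^ n = 0 := by
        have := congrArg Prod.snd h1; simpa using this
      have hfst : (χ x).1 = 0 := pow_eq_zero_iff hn0 |>.mp h1a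
      have hsnd : (χ x).2 = 0 := pow_eq_zero_iff hn0 |>.mp h1b
      exact Prod.ext hfst hsnd
    have hrepr := e.sum_repr x
    rw [Fin.sum_univ_six] at hrepr
    have hsum : χ x = (e.repr x 0) • (((1 : ℂ), (1 : ℂ)) : ℂ × ℂ)
        + (e.repr x 1) • ((I, I) : ℂ × ℂ)
        + (e.repr x 2) • ((0, 0) : ℂ × ℂ) + (e.repr x 3) • ((0, 0) : ℂ × ℂ)
        + (e.repr x 4) • ((0, 1) : ℂ × ℂ)
        + (e.repr x 5) • ((0, I) : ℂ × ℂ) := by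
      conv_lhs => rw [← hrepr]
      simp only [map_add, map_smul, hb0, hb1, hb2, hb3, hb4, hb5]
      norm_num
    rw [hχ0] at hsum
    have h1 := congrArg Prod.fst hsum.symm
    have h2 := congrArg Prod.snd hsum.symm
    simp [Prod.smul_def, Complex.real_smul, Complex.ext_iff] at h1 h2
    obtain ⟨h1a, h1b⟩ := h1
    obtain ⟨h2a, h2b⟩ := h2
    have e0 : e.repr x 0 = 0 := h1a
    have e1 : e.repr x 1 = 0 := h1b
    have e4 : e.repr x 4 = 0 := by linarith
    have e5 : e.repr x 5 = 0 := by linarith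
    have hx2 : x = e.repr x 2 • e 2 + e.repr x 3 • e 3 := by
      rw [← hrepr, e0, e1, e4, e5]
      simp
    exact Submodule.mem_span_pair.mpr ⟨e.repr x 2, e.repr x 3, hx2.symm⟩
  · intro hx
    obtain ⟨a, b, rfl⟩ := Submodule.mem_span_pair.mp hx
    refine ⟨2, ?_⟩
    have : (a • e 2 + b • e 3) * (a • e 2 + b • e 3) = 0 := by
      rw [mul_add, add_mul, add_mul, smul_mul_smul_comm, smul_mul_smul_comm,
        smul_mul_smul_comm, smul_mul_smul_comm, h22, h23,
        mul_comm (e 3) (e 2), h23, h33]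
      simp
    rw [pow_two, this]
end

section
/- For the algebra Λ₀ of Example 4 (as above), the S-differentiable function f : Λ₀ → Λ₀ defined by f(y) = y·e₂ has a non-discrete zero set: every element of the form e₃ + (1/n)e₂ for n ∈ ℕ* is a zero of f, and these accumulate at e₃, which is also a zero; moreover the image f(Λ₀) = span(e₂, e₃) is not open in Λ₀. Hence the isolated-zeros and open-mapping theorems of complex analysis fail in this setting. -/
/-- In the algebra of Example 4, the S-differentiable function
f(y) = y·e₂ has non-discrete zero set (e₃ + (1/n)e₂ are zeros accumulating at
the zero e₃) and its image is span(e₂,e₃), which is not open: the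
isolated-zeros and open-mapping theorems fail. -/
theorem stmt16 {A : Type*} [NormedCommRing A] [NormedAlgebra ℝ A]
    (e : Module.Basis (Fin 6) ℝ A) (h0 : e 0 = 1)
    (h11 : e 1 * e 1 = -e 0) (h12 : e 1 * e 2 = e 3) (h13 : e 1 * e 3 = -e 2)
    (h14 : e 1 * e 4 = e 5) (h15 : e 1 * e 5 = -e 4)
    (h22 : e 2 * e 2 = 0) (h23 : e 2 * e 3 = 0) (h24 : e 2 * e 4 = 0)
    (h25 : e 2 * e 5 = 0)
    (h33 : e 3 * e 3 = 0) (h34 : e 3 * e 4 = 0) (h35 : e 3 * e 5 = 0)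
    (h44 : e 4 * e 4 = e 4) (h45 : e 4 * e 5 = e 5) (h55 : e 5 * e 5 = -e 4) :
    (∀ n : ℕ, 0 < n → (e 3 + (n : ℝ)⁻¹ • e 2) * e 2 = 0) ∧
    (e 3 * e 2 = 0) ∧
    Filter.Tendsto (fun n : ℕ => e 3 + (n : ℝ)⁻¹ • e 2) Filter.atTop (nhds (e 3)) ∧
    Set.range (fun y : A => y * e 2) =
      (Submodule.span ℝ ({e 2, e 3} : Set A) : Set A) ∧
    ¬ IsOpen (Set.range fun y : A => y * e 2) := by
  have h32 : e 3 * e 2 = 0 := by rw [mul_comm]; exact h23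
  have key : ∀ y : A, y * e 2 = e.repr y 0 • e 2 + e.repr y 1 • e 3 := by
    intro y
    conv_lhs => rw [← e.sum_repr y]
    rw [Fin.sum_univ_six]
    simp only [add_mul, smul_mul_assoc, h12, h22, h0, one_mul]
    rw [mul_comm (e 3), mul_comm (e 4), mul_comm (e 5), h23, h24, h25]
    simp
  have hrange : Set.range (fun y : A => y * e 2) =
      (Submodule.span ℝ ({e 2, e 3} : Set A) : Set A) := by
    ext x
    constructor
    · rintro ⟨y, rfl⟩
      rw [SetLike.mem_coe, Submodule.mem_span_pair]
      exact ⟨e.repr y 0, e.repr y 1, (key y).symm⟩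
    · intro hx
      rw [SetLike.mem_coe, Submodule.mem_span_pair] at hx
      obtain ⟨a, b, rfl⟩ := hx
      refine ⟨a • e 0 + b • e 1, ?_⟩
      simp only [add_mul, smul_mul_assoc, h0, one_mul, h12]
  refine ⟨?_, h32, ?_, hrange, ?_⟩
  · intro n hn
    rw [add_mul, smul_mul_assoc, h32, h22, smul_zero, add_zero]
  · have h1 : Filter.Tendsto (fun n : ℕ => (n : ℝ)⁻¹) Filter.atTop (nhds 0) :=
      tendsto_inv_atTop_nhds_zero_nat
    have h2 : Filter.Tendsto (fun n : ℕ => (n : ℝ)⁻¹ • e 2) Filter.atTop (nhds ((0:ℝ) • e 2)) :=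
      h1.smul tendsto_const_nhds
    rw [zero_smul] at h2
    have := (tendsto_const_nhds (x := e 3) (f := Filter.atTop (α := ℕ))).add h2
    simpa using this
  · intro hopen
    rw [hrange] at hopen
    have hne : (interior ((Submodule.span ℝ ({e 2, e 3} : Set A)) : Set A)).Nonempty := by
      rw [hopen.interior_eq]
      exact ⟨0, Submodule.zero_mem _⟩
    have htop := Submodule.eq_top_of_nonempty_interior' _ hne
    have h1mem : e 0 ∈ Submodule.span ℝ ({e 2, e 3} : Set A) := by
      rw [htop]; trivial
    rw [Submodule.mem_span_pair] at h1mem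
    obtain ⟨a, b, hab⟩ := h1mem
    have := congrArg (fun z => e.repr z 0) hab
    simp [Finsupp.single_apply] at this
end

section
/- Let Λ₀ be a commutative finite-dimensional real algebra with basis (e₀,…,e_p), e₀ = 1. Suppose b ∈ Λ₀ and constants (b_j^k)_{1≤j≤p, 0≤k≤p} satisfy: b_j^k + b_k^j = 0 for j,k ≥ 1 with j ≠ k; b_j^0 = Σ_{k=1}^p e_k b_k^j; and b_j^j = b for all j. Then b · Σ_{k=0}^{p} e_k² = 0. In particular, if Σ e_k² is not a zero divisor and nonzero, then b = 0. -/
/-- The algebraic obstruction computation: if the constants b_j^k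
satisfy the antisymmetry relations, b_j^0 = Σ_{k≥1} e_k b_k^j, b_j^j = b (with
b = -Σ_{k≥1} e_k b_k^0 as in the paper's system), then b · Σ_{k=0}^p e_k² = 0;
in particular if Σ e_k² is nonzero and not a zero divisor, then b = 0. -/
theorem stmt17 {A : Type*} [CommRing A] {p : ℕ} (hp : 1 ≤ p)
    (e : Fin (p + 1) → A) (he0 : e 0 = 1)
    (b : A) (B : Fin (p + 1) → Fin (p + 1) → A)
    (hanti : ∀ j k, j ≠ 0 → k ≠ 0 → j ≠ k → B j k + B k j = 0)
    (hb0 : ∀ j, j ≠ 0 → B j 0 = ∑ k ∈ Finset.univ.erase 0, e k * B k j)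
    (hdiag : ∀ j, j ≠ 0 → B j j = b)
    (hb : b = -∑ k ∈ Finset.univ.erase 0, e k * B k 0) :
    b * (∑ k, (e k) ^ 2) = 0 ∧
      ((¬∃ c : A, c ≠ 0 ∧ c * (∑ k, (e k) ^ 2) = 0) →
        (∑ k, (e k) ^ 2) ≠ 0 → b = 0) := by
  set T := Finset.univ.erase (0 : Fin (p + 1)) with hTdef
  have key : ∑ j ∈ T, e j * B j 0 = b * ∑ j ∈ T, e j ^ 2 := by
    have h1 : ∑ j ∈ T, e j * B j 0
        = ∑ x ∈ T ×ˢ T, e x.1 * (e x.2 * B x.2 x.1) := by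
      rw [Finset.sum_product]
      refine Finset.sum_congr rfl fun j hj => ?_
      rw [hb0 j (Finset.ne_of_mem_erase hj), Finset.mul_sum]
    rw [h1, ← Finset.sum_filter_add_sum_filter_not (T ×ˢ T) (fun x => x.1 = x.2)]
    have hdiagsum : ∑ x ∈ (T ×ˢ T).filter (fun x => x.1 = x.2),
        e x.1 * (e x.2 * B x.2 x.1) = b * ∑ j ∈ T, e j ^ 2 := by
      rw [Finset.mul_sum]
      refine Finset.sum_nbij' (fun x => x.1) (fun j => (j, j)) ?_ ?_ ?_ ?_ ?_
      · intro x hx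
        simp only [Finset.mem_filter, Finset.mem_product] at hx
        exact hx.1.1
      · intro j hj
        simp only [Finset.mem_filter, Finset.mem_product]
        exact ⟨⟨hj, hj⟩, trivial⟩
      · intro x hx
        simp only [Finset.mem_filter, Finset.mem_product] at hx
        exact Prod.ext rfl hx.2
      · intro j hj; rfl
      · intro x hx
        simp only [Finset.mem_filter, Finset.mem_product] at hx
        rw [← hx.2, hdiag x.1 (Finset.ne_of_mem_erase hx.1.1)]
        ring
    have hoffsum : ∑ x ∈ (T ×ˢ T).filter (fun x => ¬ x.1 = x.2),
        e x.1 * (e x.2 * B x.2 x.1) = 0 := by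
      refine Finset.sum_involution (fun x _ => (x.2, x.1)) ?_ ?_ ?_ ?_
      · intro x hx
        simp only [Finset.mem_filter, Finset.mem_product] at hx
        have := hanti x.2 x.1 (Finset.ne_of_mem_erase hx.1.2)
          (Finset.ne_of_mem_erase hx.1.1) (fun h => hx.2 h.symm)
        calc e x.1 * (e x.2 * B x.2 x.1) + e x.2 * (e x.1 * B x.1 x.2)
            = e x.1 * e x.2 * (B x.2 x.1 + B x.1 x.2) := by ring
          _ = 0 := by rw [this, mul_zero]
      · intro x hx _
        simp only [Finset.mem_filter, Finset.mem_product] at hx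
        intro h
        exact hx.2 (congrArg Prod.snd h)
      · intro x hx
        simp only [Finset.mem_filter, Finset.mem_product] at hx ⊢
        exact ⟨⟨hx.1.2, hx.1.1⟩, fun h => hx.2 h.symm⟩
      · intro x hx; rfl
    rw [hdiagsum, hoffsum, add_zero]
  have hsplit : ∑ k, (e k) ^ 2 = 1 + ∑ k ∈ T, e k ^ 2 := by
    rw [← Finset.sum_erase_add _ _ (Finset.mem_univ (0 : Fin (p + 1))), he0]
    ring
  have hmain : b * (∑ k, (e k) ^ 2) = 0 := by
    have hsb : ∑ k ∈ T, e k * B k 0 = -b := by rw [hb]; ring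
    rw [hsplit, mul_add, mul_one, ← key, hsb]
    ring
  refine ⟨hmain, fun hnozd hne => ?_⟩
  by_contra hb'
  exact hnozd ⟨b, hb', hmain⟩
end
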